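/- Let G be a bipartite graph with parts X and Y, where X = N(a) for a vertex a and Y = N(N(a))\{a} in an ambient properly edge-coloured graph containing no rainbow C_{2k}. If the bipartite graph induced between X and Y contains a complete (100k)-ary tree of depth 2k (as a subgraph with root in X), then the ambient graph contains a rainbow cycle of length 2k, a contradiction; hence the number of edges between X and Y is at most C·(|X|+|Y|+1) for some constant C depending only on k. -/

import Mathlib

open SimpleGraph Finset

/-- A colouring of (potential) edges is proper on `G` if no two distinct edges of `G`
sharing a vertex receive the same colour. -/
def ProperColoring {V γ : Type*} (G : SimpleGraph V) (c : Sym2 V → γ) : Prop :=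
  ∀ e f : Sym2 V, e ∈ G.edgeSet → f ∈ G.edgeSet → e ≠ f → (∃ v, v ∈ e ∧ v ∈ f) → c e ≠ c f

/-- `G` (with colouring `c`) contains a rainbow cycle of length `t`. -/
def HasRainbowCycle {V γ : Type*} (G : SimpleGraph V) (c : Sym2 V → γ) (t : ℕ) : Prop :=
  ∃ (u : V) (w : G.Walk u u), w.IsCycle ∧ w.length = t ∧ (w.edges.map c).Nodup

lemma proper_at {V γ : Type*} {G : SimpleGraph V} {c : Sym2 V → γ}
    (hc : ProperColoring G c) {u v v' : V} (h1 : G.Adj u v) (h2 : G.Adj u v')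
    (hne : v ≠ v') : c s(u, v) ≠ c s(u, v') := by
  refine hc _ _ (G.mem_edgeSet.mpr h1) (G.mem_edgeSet.mpr h2) ?_ ⟨u, by simp, by simp⟩
  intro he
  rcases Sym2.eq_iff.mp he with ⟨-, h4⟩ | ⟨h3, -⟩
  · exact hne h4
  · rw [← h3] at h2; exact G.irrefl h2

lemma proper_shared {V γ : Type*} {G : SimpleGraph V} {c : Sym2 V → γ}
    (hc : ProperColoring G c) {x b d : V} (h1 : G.Adj x b) (h2 : G.Adj x d)
    (hbd : b ≠ d) : c s(b, x) ≠ c s(x, d) := by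
  have := proper_at hc h1 h2 hbd
  rwa [Sym2.eq_swap (a := x) (b := b)] at this

lemma filter_mem_list_card_le {V : Type*} [DecidableEq V] (s : Finset V) (l : List V) :
    (s.filter (fun v => v ∈ l)).card ≤ l.length := by
  have h : s.filter (fun v => v ∈ l) ⊆ l.toFinset := by
    intro v hv; simp only [Finset.mem_filter] at hv; simpa using hv.2
  exact (Finset.card_le_card h).trans (List.toFinset_card_le l)

lemma filter_color_card_le {V γ : Type*} [DecidableEq V] [DecidableEq γ]
    (s : Finset V) (g : V → γ) (F : List γ) (hinj : Set.InjOn g s) :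
    (s.filter (fun v => g v ∈ F)).card ≤ F.length := by
  have h1 : (s.filter (fun v => g v ∈ F)).card
      = ((s.filter (fun v => g v ∈ F)).image g).card := by
    rw [Finset.card_image_of_injOn]
    exact hinj.mono (by exact_mod_cast Finset.filter_subset _ s)
  have h2 : (s.filter (fun v => g v ∈ F)).image g ⊆ F.toFinset := by
    intro x hx
    simp only [Finset.mem_image, Finset.mem_filter] at hx
    obtain ⟨v, ⟨_, hv⟩, rfl⟩ := hx
    simpa using hv
  rw [h1]
  exact (Finset.card_le_card h2).trans (List.toFinset_card_le F)

lemma clean_lemma {V : Type} [DecidableEq V] (D : ℕ) :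
    ∀ E : Finset (V × V),
      D * ((E.image Prod.fst).card + (E.image Prod.snd).card) < E.card →
      ∃ E' ⊆ E, E'.Nonempty ∧ ∀ p ∈ E',
        D < (E'.filter (fun q => q.1 = p.1)).card ∧
        D < (E'.filter (fun q => q.2 = p.2)).card := by
  intro E
  induction E using Finset.strongInduction with
  | _ E ih =>
    intro hE
    have hEne : E.Nonempty := by
      rcases E.eq_empty_or_nonempty with h | h
      · subst h; simp at hE
      · exact h
    by_cases hall : ∀ p ∈ E, D < (E.filter (fun q => q.1 = p.1)).card ∧
        D < (E.filter (fun q => q.2 = p.2)).card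
    · exact ⟨E, Finset.Subset.refl E, hEne, hall⟩
    · push_neg at hall
      obtain ⟨p, hp, hbad⟩ := hall
      rcases le_or_gt (E.filter (fun q => q.1 = p.1)).card D with h1 | h1
      · -- remove all edges with first coord p.1
        set E₂ := E.filter (fun q => ¬ q.1 = p.1) with hE₂
        have hsub : E₂ ⊂ E := by
          refine Finset.ssubset_iff_of_subset (Finset.filter_subset _ _) |>.mpr ⟨p, hp, ?_⟩
          simp [hE₂]
        have hsplit : (E.filter (fun q => q.1 = p.1)).card + E₂.card = E.card := by
          rw [hE₂]; exact Finset.card_filter_add_card_filter_not _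
        have himf : (E₂.image Prod.fst).card + 1 ≤ (E.image Prod.fst).card := by
          have hsub2 : E₂.image Prod.fst ⊆ (E.image Prod.fst).erase p.1 := by
            intro x hx
            simp only [Finset.mem_image, hE₂, Finset.mem_filter] at hx
            obtain ⟨q, ⟨hq, hq1⟩, rfl⟩ := hx
            exact Finset.mem_erase.mpr ⟨hq1, Finset.mem_image_of_mem _ hq⟩
          have hmem : p.1 ∈ E.image Prod.fst := Finset.mem_image_of_mem _ hp
          have := Finset.card_le_card hsub2
          rw [Finset.card_erase_of_mem hmem] at this
          have hpos : 1 ≤ (E.image Prod.fst).card := Finset.card_pos.mpr ⟨p.1, hmem⟩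
          omega
        have hims : (E₂.image Prod.snd).card ≤ (E.image Prod.snd).card :=
          Finset.card_le_card (Finset.image_subset_image (Finset.filter_subset _ _))
        have hlt : D * ((E₂.image Prod.fst).card + (E₂.image Prod.snd).card) < E₂.card := by
          have : D * ((E₂.image Prod.fst).card + (E₂.image Prod.snd).card + 1)
              ≤ D * ((E.image Prod.fst).card + (E.image Prod.snd).card) := by
            apply Nat.mul_le_mul_left; omega
          nlinarith
        obtain ⟨E', hE'sub, hE'ne, hE'deg⟩ := ih E₂ hsub hlt
        exact ⟨E', hE'sub.trans (Finset.filter_subset _ _), hE'ne, hE'deg⟩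
      · -- second side must be small
        have h2 : (E.filter (fun q => q.2 = p.2)).card ≤ D := by
          rcases hbad h1 with h2; omega
        set E₂ := E.filter (fun q => ¬ q.2 = p.2) with hE₂
        have hsub : E₂ ⊂ E := by
          refine Finset.ssubset_iff_of_subset (Finset.filter_subset _ _) |>.mpr ⟨p, hp, ?_⟩
          simp [hE₂]
        have hsplit : (E.filter (fun q => q.2 = p.2)).card + E₂.card = E.card := by
          rw [hE₂]; exact Finset.card_filter_add_card_filter_not _
        have himf : (E₂.image Prod.snd).card + 1 ≤ (E.image Prod.snd).card := by
          have hsub2 : E₂.image Prod.snd ⊆ (E.image Prod.snd).erase p.2 := by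
            intro x hx
            simp only [Finset.mem_image, hE₂, Finset.mem_filter] at hx
            obtain ⟨q, ⟨hq, hq1⟩, rfl⟩ := hx
            exact Finset.mem_erase.mpr ⟨hq1, Finset.mem_image_of_mem _ hq⟩
          have hmem : p.2 ∈ E.image Prod.snd := Finset.mem_image_of_mem _ hp
          have := Finset.card_le_card hsub2
          rw [Finset.card_erase_of_mem hmem] at this
          have hpos : 1 ≤ (E.image Prod.snd).card := Finset.card_pos.mpr ⟨p.2, hmem⟩
          omega
        have hims : (E₂.image Prod.fst).card ≤ (E.image Prod.fst).card :=
          Finset.card_le_card (Finset.image_subset_image (Finset.filter_subset _ _))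
        have hlt : D * ((E₂.image Prod.fst).card + (E₂.image Prod.snd).card) < E₂.card := by
          have : D * ((E₂.image Prod.fst).card + (E₂.image Prod.snd).card + 1)
              ≤ D * ((E.image Prod.fst).card + (E.image Prod.snd).card) := by
            apply Nat.mul_le_mul_left; omega
          nlinarith
        obtain ⟨E', hE'sub, hE'ne, hE'deg⟩ := ih E₂ hsub hlt
        exact ⟨E', hE'sub.trans (Finset.filter_subset _ _), hE'ne, hE'deg⟩

lemma greedy_lemma {V : Type} [DecidableEq V] {γ : Type} [DecidableEq γ]
    (G : SimpleGraph V) (c : Sym2 V → γ) (hc : ProperColoring G c) (a : V)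
    (k : ℕ) (hk : 2 ≤ k) (E' : Finset (V × V)) (hne : E'.Nonempty)
    (hS : ∀ p ∈ E', G.Adj a p.1 ∧ p.2 ≠ a ∧ G.Adj p.1 p.2)
    (hdeg : ∀ p ∈ E', 12 * k < (E'.filter (fun q => q.1 = p.1)).card ∧
        12 * k < (E'.filter (fun q => q.2 = p.2)).card) :
    HasRainbowCycle G c (2 * k) := by
  classical
  obtain ⟨p₀, hp₀⟩ := hne
  set x₀ := p₀.1 with hx₀
  have hax₀ : G.Adj a x₀ := (hS p₀ hp₀).1
  -- the invariant
  let P : ℕ → Prop := fun j => ∃ (u : V) (w : G.Walk u x₀) (xs : List V),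
    w.length = 2 * j ∧ w.support.Nodup ∧ a ∉ w.support ∧
    (∃ q ∈ E', q.1 = u) ∧
    (∀ v ∈ xs, v ∈ w.support) ∧ xs.length ≤ j + 1 ∧ u ∈ xs ∧ x₀ ∈ xs ∧
    ((xs.map (fun v => c s(a, v))) ++ (w.edges.map c)).Nodup
  have base : P 0 := by
    refine ⟨x₀, Walk.nil, [x₀], by simp, by simp, ?_, ⟨p₀, hp₀, rfl⟩, by simp, by simp,
      by simp, by simp, by simp⟩
    simp only [Walk.support_nil, List.mem_singleton]
    exact fun h => G.irrefl (h ▸ hax₀)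
  have step : ∀ j, j + 1 < k → P j → P (j + 1) := by
    intro j hj ⟨u, w, xs, hlen, hnd, hna, ⟨qu, hqu, hqu1⟩, hxs, hxslen, huxs, hx₀xs, hF⟩
    set f : V → γ := fun v => c s(a, v) with hf
    set F : List γ := (xs.map f) ++ (w.edges.map c) with hFdef
    have hFlen : F.length ≤ 3 * j + 1 := by
      simp only [hFdef, List.length_append, List.length_map, Walk.length_edges]
      omega
    have hsuplen : w.support.length = 2 * j + 1 := by
      rw [Walk.length_support, hlen]
    -- candidates for y
    set Cy : Finset V := (E'.filter (fun q => q.1 = u)).image Prod.snd with hCy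
    have hmemCy : ∀ y ∈ Cy, (u, y) ∈ E' := by
      intro y hy
      simp only [hCy, Finset.mem_image, Finset.mem_filter] at hy
      obtain ⟨q, ⟨hq, hq1⟩, hq2⟩ := hy
      have : q = (u, y) := Prod.ext hq1 hq2
      rwa [← this]
    have hCycard : 12 * k < Cy.card := by
      rw [hCy, Finset.card_image_of_injOn]
      · exact (hdeg qu hqu).1.trans_eq (by rw [hqu1])
      · intro p hp p' hp' hpp
        simp only [Finset.coe_filter, Set.mem_setOf_eq] at hp hp'
        exact Prod.ext (hp.2.trans hp'.2.symm) hpp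
    -- bad y's
    have hinjy : Set.InjOn (fun y => c s(u, y)) Cy := by
      intro y hy y' hy' he
      by_contra hne'
      exact proper_at hc (hS _ (hmemCy y hy)).2.2 (hS _ (hmemCy y' hy')).2.2 hne' he
    have hbady : (Cy.filter (fun y => y ∈ w.support ∨ c s(u, y) ∈ F)).card ≤ 5 * j + 2 := by
      calc (Cy.filter (fun y => y ∈ w.support ∨ c s(u, y) ∈ F)).card
          ≤ (Cy.filter (fun y => y ∈ w.support)).card
            + (Cy.filter (fun y => c s(u, y) ∈ F)).card := by
            rw [Finset.filter_or]; exact Finset.card_union_le _ _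
        _ ≤ (2 * j + 1) + (3 * j + 1) := by
            gcongr
            · exact (filter_mem_list_card_le Cy w.support).trans (by omega)
            · exact (filter_color_card_le Cy _ F hinjy).trans hFlen
        _ = 5 * j + 2 := by ring
    have hyex : ∃ y ∈ Cy, ¬(y ∈ w.support ∨ c s(u, y) ∈ F) := by
      by_contra hcon
      push_neg at hcon
      have : Cy.filter (fun y => y ∈ w.support ∨ c s(u, y) ∈ F) = Cy :=
        Finset.filter_true_of_mem (fun y hy => hcon y hy)
      rw [this] at hbady
      omega
    obtain ⟨y, hyCy, hybad⟩ := hyex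
    push_neg at hybad
    obtain ⟨hysup, hycol⟩ := hybad
    have huyE : (u, y) ∈ E' := hmemCy y hyCy
    have hadjuy : G.Adj u y := (hS _ huyE).2.2
    have hyne_a : y ≠ a := (hS _ huyE).2.1
    -- candidates for x
    set Cx : Finset V := (E'.filter (fun q => q.2 = y)).image Prod.fst with hCxd
    have hmemCx : ∀ x ∈ Cx, (x, y) ∈ E' := by
      intro x hx
      simp only [hCxd, Finset.mem_image, Finset.mem_filter] at hx
      obtain ⟨q, ⟨hq, hq2⟩, hq1⟩ := hx
      have : q = (x, y) := Prod.ext hq1 hq2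
      rwa [← this]
    have hCxcard : 12 * k < Cx.card := by
      rw [hCxd, Finset.card_image_of_injOn]
      · exact (hdeg _ huyE).2
      · intro p hp p' hp' hpp
        simp only [Finset.coe_filter, Set.mem_setOf_eq] at hp hp'
        exact Prod.ext hpp (hp.2.trans hp'.2.symm)
    set F' : List γ := c s(u, y) :: F with hF'def
    have hF'len : F'.length ≤ 3 * j + 2 := by
      simp only [hF'def, List.length_cons]; omega
    have hinjx1 : Set.InjOn (fun x => c s(x, y)) Cx := by
      intro x hx x' hx' he
      by_contra hne'
      have h1 : G.Adj y x := ((hS _ (hmemCx x hx)).2.2).symm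
      have h2 : G.Adj y x' := ((hS _ (hmemCx x' hx')).2.2).symm
      have := proper_at hc h1 h2 hne'
      rw [Sym2.eq_swap (a := y) (b := x), Sym2.eq_swap (a := y) (b := x')] at this
      exact this he
    have hinjx2 : Set.InjOn (fun x => c s(a, x)) Cx := by
      intro x hx x' hx' he
      by_contra hne'
      exact proper_at hc (hS _ (hmemCx x hx)).1 (hS _ (hmemCx x' hx')).1 hne' he
    have hbadx : (Cx.filter
        (fun x => x ∈ (y :: w.support) ∨ c s(x, y) ∈ F' ∨ c s(a, x) ∈ F')).card
        ≤ 8 * j + 6 := by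
      calc (Cx.filter (fun x => x ∈ (y :: w.support) ∨ c s(x, y) ∈ F' ∨ c s(a, x) ∈ F')).card
          ≤ (Cx.filter (fun x => x ∈ (y :: w.support))).card
            + ((Cx.filter (fun x => c s(x, y) ∈ F')).card
              + (Cx.filter (fun x => c s(a, x) ∈ F')).card) := by
            rw [Finset.filter_or, Finset.filter_or]
            exact (Finset.card_union_le _ _).trans (by gcongr; exact Finset.card_union_le _ _)
        _ ≤ (2 * j + 2) + ((3 * j + 2) + (3 * j + 2)) := by
            gcongr
            · exact (filter_mem_list_card_le Cx (y :: w.support)).trans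
                (by simp [hsuplen])
            · exact (filter_color_card_le Cx _ F' hinjx1).trans hF'len
            · exact (filter_color_card_le Cx _ F' hinjx2).trans hF'len
        _ = 8 * j + 6 := by ring
    have hxex : ∃ x ∈ Cx, ¬(x ∈ (y :: w.support) ∨ c s(x, y) ∈ F' ∨ c s(a, x) ∈ F') := by
      by_contra hcon
      push_neg at hcon
      have : Cx.filter (fun x => x ∈ (y :: w.support) ∨ c s(x, y) ∈ F' ∨ c s(a, x) ∈ F') = Cx :=
        Finset.filter_true_of_mem (fun x hx => hcon x hx)
      rw [this] at hbadx
      omega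
    obtain ⟨x, hxCx, hxbad⟩ := hxex
    push_neg at hxbad
    obtain ⟨hxsup, hxcol1, hxcol2⟩ := hxbad
    have hxyE : (x, y) ∈ E' := hmemCx x hxCx
    have hadjxy : G.Adj x y := (hS _ hxyE).2.2
    have hadjax : G.Adj a x := (hS _ hxyE).1
    -- build the new walk
    refine ⟨x, Walk.cons hadjxy (Walk.cons hadjuy.symm w), x :: xs, ?_, ?_, ?_,
      ⟨(x, y), hxyE, rfl⟩, ?_, ?_, ?_, ?_, ?_⟩
    · simp [hlen]; ring
    · simp only [Walk.support_cons, List.nodup_cons]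
      refine ⟨?_, ?_, hnd⟩
      · simpa using hxsup
      · exact hysup
    · simp only [Walk.support_cons, List.mem_cons]
      push_neg
      exact ⟨fun h => G.irrefl (h ▸ hadjax), fun h => hyne_a h.symm, hna⟩
    · intro v hv
      simp only [Walk.support_cons, List.mem_cons] at *
      rcases hv with rfl | hv
      · left; rfl
      · right; right; exact hxs v hv
    · simp only [List.length_cons]; omega
    · exact List.mem_cons_self
    · exact List.mem_cons_of_mem _ hx₀xs
    · -- nodup of colors
      have hedges : (Walk.cons hadjxy (Walk.cons hadjuy.symm w)).edges
          = s(x, y) :: s(y, u) :: w.edges := by simp [Walk.edges_cons]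
      rw [hedges]
      simp only [List.map_cons, List.map_append]
      have hswap : c s(y, u) = c s(u, y) := by rw [Sym2.eq_swap]
      have hperm : List.Perm
          ((List.map f xs) ++ (c s(x, y) :: c s(y, u) :: List.map c w.edges))
          (c s(x, y) :: c s(y, u) :: F) := by
        rw [hFdef]
        exact List.perm_middle.trans (List.Perm.cons _ List.perm_middle)
      have hxcol2' : c s(a, x) ∉ F ∧ c s(a, x) ≠ c s(u, y) := by
        simp only [hF'def, List.mem_cons, not_or] at hxcol2
        exact ⟨hxcol2.2, hxcol2.1⟩
      have hxcol1' : c s(x, y) ∉ F ∧ c s(x, y) ≠ c s(u, y) := by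
        simp only [hF'def, List.mem_cons, not_or] at hxcol1
        exact ⟨hxcol1.2, hxcol1.1⟩
      have hab : c s(a, x) ≠ c s(x, y) := by
        refine proper_shared hc hadjax.symm hadjxy (fun h => hyne_a h.symm)
      have hgood : (c s(a, x) :: (c s(x, y) :: c s(y, u) :: F)).Nodup := by
        simp only [List.nodup_cons, List.mem_cons, not_or, hswap]
        exact ⟨⟨hab, hxcol2'.2, hxcol2'.1⟩, ⟨hxcol1'.2, hxcol1'.1⟩, hycol, hF⟩
      exact ((hperm.cons (c s(a, x))).nodup_iff).mpr hgood
  -- iterate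
  have main : ∀ j, j ≤ k - 1 → P j := by
    intro j
    induction j with
    | zero => intro _; exact base
    | succ n ih => intro h; exact step n (by omega) (ih (by omega))
  obtain ⟨u, w, xs, hlen, hnd, hna, ⟨qu, hqu, hqu1⟩, hxs, _, huxs, hx₀xs, hF⟩ :=
    main (k - 1) le_rfl
  have hau : G.Adj a u := hqu1 ▸ (hS qu hqu).1
  have hux₀ : u ≠ x₀ := by
    have hlen' : w.length ≠ 0 := by rw [hlen]; omega
    clear hna hxs huxs hx₀xs hF hlen
    revert hlen' hnd
    cases w with
    | nil => intro _ hlen'; exact absurd rfl hlen'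
    | cons h' w' =>
      intro hnd _
      simp only [Walk.support_cons, List.nodup_cons] at hnd
      exact fun he => hnd.1 (he ▸ w'.end_mem_support)
  set f : V → γ := fun v => c s(a, v) with hf
  have hdisj : List.Disjoint (xs.map f) (w.edges.map c) := List.disjoint_of_nodup_append hF
  have hem : (w.edges.map c).Nodup := (List.nodup_append.mp hF).2.1
  have hfu_nem : c s(a, u) ∉ w.edges.map c := hdisj (List.mem_map_of_mem (f := f) huxs)
  have hfx₀_nem : c s(a, x₀) ∉ w.edges.map c := hdisj (List.mem_map_of_mem (f := f) hx₀xs)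
  have hneq : c s(a, u) ≠ c s(a, x₀) := proper_at hc hau hax₀ hux₀
  have hswap₀ : c s(x₀, a) = c s(a, x₀) := by rw [Sym2.eq_swap]
  have hcolors : ((Walk.cons hau (w.concat hax₀.symm)).edges.map c).Nodup := by
    rw [Walk.edges_cons, Walk.edges_concat, List.concat_eq_append]
    simp only [List.map_cons, List.map_append, List.map_cons, List.map_nil]
    rw [List.nodup_cons]
    constructor
    · rw [List.mem_append]
      push_neg
      exact ⟨hfu_nem, by simp [hswap₀, hneq]⟩
    · rw [List.nodup_append']
      refine ⟨hem, by simp, ?_⟩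
      intro z hz
      simp only [List.mem_singleton]
      intro hz'
      rw [hz', hswap₀] at hz
      exact hfx₀_nem hz
  refine ⟨a, Walk.cons hau (w.concat hax₀.symm), ⟨⟨⟨?_⟩, ?_⟩, ?_⟩, ?_, hcolors⟩
  · exact List.Nodup.of_map c hcolors
  · simp
  · rw [Walk.support_cons, List.tail_cons, Walk.support_concat]
    rw [List.nodup_append']
    refine ⟨hnd, by simp, ?_⟩
    intro z hz
    simp only [List.mem_singleton]
    intro hz'
    rw [hz'] at hz
    exact hna hz
  · rw [Walk.length_cons, Walk.length_concat, hlen]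
    omega


theorem edges_between_nbhd_and_second_nbhd (k : ℕ) (hk : 2 ≤ k) :
    ∃ C : ℕ, ∀ (V : Type) [Fintype V] (G : SimpleGraph V) (γ : Type) (c : Sym2 V → γ),
      ProperColoring G c → ¬ HasRainbowCycle G c (2 * k) →
      ∀ a : V,
        {p : V × V | p.1 ∈ G.neighborSet a ∧
            p.2 ∈ {y | y ≠ a ∧ ∃ x ∈ G.neighborSet a, G.Adj x y} ∧
            G.Adj p.1 p.2}.ncard
          ≤ C * ((G.neighborSet a).ncard
              + {y | y ≠ a ∧ ∃ x ∈ G.neighborSet a, G.Adj x y}.ncard + 1) := by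
  classical
  refine ⟨12 * k, ?_⟩
  intro V _ G γ c hc hnr a
  by_contra hcon
  push_neg at hcon
  set Y : Set V := {y | y ≠ a ∧ ∃ x ∈ G.neighborSet a, G.Adj x y} with hY
  set S : Set (V × V) := {p : V × V | p.1 ∈ G.neighborSet a ∧ p.2 ∈ Y ∧ G.Adj p.1 p.2}
    with hSdef
  have hSfin : S.Finite := Set.toFinite _
  set E₀ := hSfin.toFinset with hE₀
  have hcard : S.ncard = E₀.card := Set.ncard_eq_toFinset_card S hSfin
  have hXfin : (G.neighborSet a).Finite := Set.toFinite _
  have hYfin : Y.Finite := Set.toFinite _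
  have himf : (E₀.image Prod.fst).card ≤ (G.neighborSet a).ncard := by
    rw [Set.ncard_eq_toFinset_card _ hXfin]
    apply Finset.card_le_card
    intro x hx
    obtain ⟨p, hp, rfl⟩ := Finset.mem_image.mp hx
    exact hXfin.mem_toFinset.mpr (hSfin.mem_toFinset.mp hp).1
  have hims : (E₀.image Prod.snd).card ≤ Y.ncard := by
    rw [Set.ncard_eq_toFinset_card _ hYfin]
    apply Finset.card_le_card
    intro y hy
    obtain ⟨p, hp, rfl⟩ := Finset.mem_image.mp hy
    exact hYfin.mem_toFinset.mpr (hSfin.mem_toFinset.mp hp).2.1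
  have hlt : 12 * k * ((E₀.image Prod.fst).card + (E₀.image Prod.snd).card) < E₀.card := by
    calc 12 * k * ((E₀.image Prod.fst).card + (E₀.image Prod.snd).card)
        ≤ 12 * k * ((G.neighborSet a).ncard + Y.ncard + 1) := by
          apply Nat.mul_le_mul_left; omega
      _ < S.ncard := hcon
      _ = E₀.card := hcard
  obtain ⟨E', hsub, hne, hdeg⟩ := clean_lemma (12 * k) E₀ hlt
  refine hnr (greedy_lemma G c hc a k hk E' hne ?_ hdeg)
  intro p hp
  have hpS := hSfin.mem_toFinset.mp (hsub hp)
  exact ⟨hpS.1, hpS.2.1.1, hpS.2.2⟩
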